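/- Define on the space F of Definition 6.3 the seminorm β(f)² = ∑_{n,k} 2^{-4π^{-1}(n+1,k)} |e*_{(n,k)}(f) − 2e*_{(n+1,k)}(f)|², where e*_{(n,k)} are the coordinate functionals of ℓ²(X). Then for every d ≥ 0 and every f in the closed span of {f_{d+1}, f_{d+2}, …}, one has β(f) ≤ 2·2^{-2d}‖f‖; in particular β(f) ≤ 2‖f‖ for all f ∈ F. -/

import Mathlib

/-- Lemma 7.2: on the space `F` of Definition 6.3 (here `Y`, with its norm standing for
the norm `‖·‖` of `F`), with the diagonal enumeration `π(i) = ι (i−1)` of `ℕ²` (so that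
`π^{-1}(n,k) = ι.symm (n,k) + 1`, and `π^{-1}(n,k) < π^{-1}(n+1,k)`), the basis
`f_i = fv (i−1)`, the coordinate functionals `e*_{(n,k)} = estar (n,k)` satisfying
`|e*_{(n,k)}(f)| ≤ 2·(8/7)·‖f‖`, and the seminorm
`β(f)² = ∑_{n,k} 2^{-4π^{-1}(n+1,k)}|e*_{(n,k)}(f) − 2e*_{(n+1,k)}(f)|²`,
every `f` in the closed span of `{f_{d+1}, f_{d+2}, …}` satisfies `β(f) ≤ 2·2^{-2d}‖f‖`;
in particular `β(f) ≤ 2‖f‖` for every `f`. -/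
theorem stmt17 {Y : Type*} [NormedAddCommGroup Y] [NormedSpace ℝ Y] [CompleteSpace Y]
    (ι : ℕ ≃ ℕ × ℕ)
    (hι : ∀ p : ℕ × ℕ, ι.symm p < ι.symm (p.1 + 1, p.2))
    (fv : ℕ → Y) (estar : ℕ × ℕ → Y →L[ℝ] ℝ)
    (hbiorth : ∀ (i : ℕ) (p : ℕ × ℕ), estar p (fv i) = if p = ι i then (1 : ℝ) else 0)
    (hbd : ∀ (p : ℕ × ℕ) (y : Y), |estar p y| ≤ 2 * (8 / 7) * ‖y‖)
    (β : Y → ℝ)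
    (hβ : ∀ y : Y, β y = Real.sqrt (∑' p : ℕ × ℕ,
      ((2 : ℝ) ^ (4 * (ι.symm (p.1 + 1, p.2) + 1)))⁻¹
        * (estar p y - 2 * estar (p.1 + 1, p.2) y) ^ 2)) :
    (∀ d : ℕ, ∀ y ∈ closure ((Submodule.span ℝ (fv '' {i | d ≤ i}) : Submodule ℝ Y) : Set Y),
      β y ≤ 2 * ((2 : ℝ) ^ (2 * d))⁻¹ * ‖y‖)
    ∧ ∀ y : Y, β y ≤ 2 * ‖y‖ := by
  classical
  -- core estimate
  have key : ∀ (d : ℕ) (y : Y), (∀ p : ℕ × ℕ, ι.symm p < d → estar p y = 0) →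
      β y ≤ 2 * ((2 : ℝ) ^ (2 * d))⁻¹ * ‖y‖ := by
    intro d y hz
    set r : ℝ := (16 : ℝ)⁻¹ with hrdef
    have hr0 : (0:ℝ) ≤ r := by norm_num [hrdef]
    have hr1 : r < 1 := by norm_num [hrdef]
    set A : ℝ := (48 / 7 * ‖y‖) ^ 2 with hAdef
    have hA0 : 0 ≤ A := sq_nonneg _
    set e : ℕ × ℕ → ℕ := fun p => ι.symm (p.1 + 1, p.2) with hedef
    have he_inj : Function.Injective e := by
      intro p q h
      have h2 : ((p.1 + 1, p.2) : ℕ × ℕ) = (q.1 + 1, q.2) := ι.symm.injective h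
      have h3 := Prod.ext_iff.1 h2
      exact Prod.ext (by omega) h3.2
    set g : ℕ × ℕ → ℝ := fun p =>
      ((2 : ℝ) ^ (4 * (ι.symm (p.1 + 1, p.2) + 1)))⁻¹
        * (estar p y - 2 * estar (p.1 + 1, p.2) y) ^ 2 with hgdef
    set H : ℕ → ℝ := fun m => if d ≤ m then A * r ^ (m + 1) else 0 with hHdef
    have hpow : ∀ n : ℕ, ((2 : ℝ) ^ (4 * n))⁻¹ = r ^ n := by
      intro n
      rw [pow_mul, ← inv_pow]
      norm_num [hrdef]
    have hΔ : ∀ p : ℕ × ℕ, |estar p y - 2 * estar (p.1 + 1, p.2) y| ≤ 48 / 7 * ‖y‖ := by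
      intro p
      calc |estar p y - 2 * estar (p.1 + 1, p.2) y|
          ≤ |estar p y| + |2 * estar (p.1 + 1, p.2) y| := abs_sub _ _
        _ ≤ 2 * (8 / 7) * ‖y‖ + 2 * (2 * (8 / 7) * ‖y‖) := by
            have h1 := hbd p y
            have h2 := hbd (p.1 + 1, p.2) y
            rw [abs_mul]
            have h3 : |(2:ℝ)| = 2 := by norm_num
            rw [h3]
            nlinarith
        _ = 48 / 7 * ‖y‖ := by ring
    have hΔsq : ∀ p : ℕ × ℕ, (estar p y - 2 * estar (p.1 + 1, p.2) y) ^ 2 ≤ A := by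
      intro p
      rw [hAdef]
      have h := hΔ p
      nlinarith [abs_nonneg (estar p y - 2 * estar (p.1 + 1, p.2) y),
        sq_abs (estar p y - 2 * estar (p.1 + 1, p.2) y)]
    have hgnn : ∀ p, 0 ≤ g p := fun p =>
      mul_nonneg (inv_nonneg.2 (by positivity)) (sq_nonneg _)
    have hgle : ∀ p, g p ≤ H (e p) := by
      intro p
      rcases le_or_gt d (e p) with hd | hd
      · have hH : H (e p) = A * r ^ (e p + 1) := if_pos hd
        rw [hH, hgdef]
        simp only
        rw [show ι.symm (p.1 + 1, p.2) = e p from rfl, hpow]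
        rw [mul_comm A _]
        exact mul_le_mul_of_nonneg_left (hΔsq p) (by positivity)
      · have hz1 : estar p y = 0 := hz p (lt_trans (hι p) hd)
        have hz2 : estar (p.1 + 1, p.2) y = 0 := hz _ hd
        have hH : H (e p) = 0 := if_neg (not_le.2 hd)
        rw [hH, hgdef]
        simp [hz1, hz2]
    have hHnn : ∀ m, 0 ≤ H m := by
      intro m
      rw [hHdef]
      dsimp only
      split
      · positivity
      · exact le_rfl
    -- summability of H
    have hHshift : ∀ n : ℕ, H (n + d) = A * r ^ (d + 1) * r ^ n := by
      intro n
      rw [hHdef]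
      dsimp only
      rw [if_pos (by omega)]
      rw [mul_assoc, ← pow_add]
      ring_nf
    have hgeo : Summable (fun n : ℕ => r ^ n) := summable_geometric_of_lt_one hr0 hr1
    have hHsummable : Summable H := by
      apply (summable_nat_add_iff d).1
      exact (hgeo.mul_left (A * r ^ (d + 1))).congr (fun n => (hHshift n).symm)
    have hgsummable : Summable g :=
      Summable.of_nonneg_of_le hgnn hgle (hHsummable.comp_injective he_inj)
    -- sum of H
    have hHsum : ∑' m, H m = A * r ^ (d + 1) * (1 - r)⁻¹ := by
      rw [← hHsummable.sum_add_tsum_nat_add d]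
      have h1 : ∑ i ∈ Finset.range d, H i = 0 := by
        apply Finset.sum_eq_zero
        intro i hi
        rw [hHdef]
        exact if_neg (by simp at hi; omega)
      rw [h1, zero_add]
      rw [tsum_congr hHshift, tsum_mul_left, tsum_geometric_of_lt_one hr0 hr1]
    -- bound the tsum
    have hle : ∑' p, g p ≤ A * r ^ (d + 1) * (1 - r)⁻¹ := by
      rw [← hHsum]
      exact hgsummable.tsum_le_tsum_of_inj e he_inj (fun c _ => hHnn c) hgle hHsummable
    -- conclude
    have hB0 : (0:ℝ) ≤ 2 * ((2 : ℝ) ^ (2 * d))⁻¹ * ‖y‖ := by positivity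
    rw [hβ y]
    have hsq : ∑' p : ℕ × ℕ, ((2 : ℝ) ^ (4 * (ι.symm (p.1 + 1, p.2) + 1)))⁻¹
        * (estar p y - 2 * estar (p.1 + 1, p.2) y) ^ 2
        ≤ (2 * ((2 : ℝ) ^ (2 * d))⁻¹ * ‖y‖) ^ 2 := by
      refine le_trans hle ?_
      have h16 : ((2 : ℝ) ^ (2 * d))⁻¹ ^ 2 = r ^ d := by
        rw [← inv_pow, ← pow_mul, show 2 * d * 2 = 4 * d by ring, pow_mul, hrdef]
        norm_num
      have hrd : (0:ℝ) ≤ r ^ d := by positivity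
      have expand : (2 * ((2 : ℝ) ^ (2 * d))⁻¹ * ‖y‖) ^ 2
          = 4 * r ^ d * ‖y‖ ^ 2 := by
        rw [mul_pow, mul_pow, h16]; ring
      rw [expand, hAdef]
      have : r ^ (d + 1) = r ^ d * r := pow_succ r d
      rw [this, hrdef]
      norm_num
      nlinarith [sq_nonneg ‖y‖, mul_nonneg hrd (sq_nonneg ‖y‖)]
    calc Real.sqrt _ ≤ Real.sqrt ((2 * ((2 : ℝ) ^ (2 * d))⁻¹ * ‖y‖) ^ 2) :=
          Real.sqrt_le_sqrt hsq
      _ = 2 * ((2 : ℝ) ^ (2 * d))⁻¹ * ‖y‖ := Real.sqrt_sq hB0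
  constructor
  · intro d y hy
    apply key d y
    intro p hp
    have hker : (Submodule.span ℝ (fv '' {i | d ≤ i}) : Submodule ℝ Y)
        ≤ LinearMap.ker (estar p : Y →ₗ[ℝ] ℝ) := by
      rw [Submodule.span_le]
      rintro _ ⟨i, hi, rfl⟩
      simp only [SetLike.mem_coe, LinearMap.mem_ker, ContinuousLinearMap.coe_coe]
      rw [hbiorth i p]
      apply if_neg
      intro hpe
      have : ι.symm p = i := by rw [hpe]; exact ι.symm_apply_apply i
      simp only [Set.mem_setOf_eq] at hi
      omega
    have hclosed : IsClosed ((LinearMap.ker (estar p : Y →ₗ[ℝ] ℝ) : Submodule ℝ Y) : Set Y) :=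
      ContinuousLinearMap.isClosed_ker _
    have := closure_mono (hker : _ ⊆ ((LinearMap.ker (estar p : Y →ₗ[ℝ] ℝ) : Submodule ℝ Y) : Set Y)) hy
    rw [hclosed.closure_eq] at this
    exact this
  · intro y
    have := key 0 y (fun p hp => absurd hp (Nat.not_lt_zero _))
    simpa using this
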